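/- The explicit dual basis function θ_{σ_4} = −(65/6)λ_1(2λ_1−1) − (65/6)λ_2(2λ_2−1) − (10/3)λ_3(2λ_3−1) − 490λ_1λ_2λ_3 + (215/3)λ_1λ_2 + (115/6)λ_2λ_3 + (115/6)λ_3λ_1 satisfies the Riesz property for the midpoint evaluation: for every u_h ∈ V_k(T), (1/|T|)∫_T θ_{σ_4} u_h dx = u_h(σ_4), where σ_4 is the midpoint of the edge [σ_1, σ_2] (barycentric point (1/2, 1/2, 0)). -/

import Mathlib

open MeasureTheory Finset

noncomputable section

def T : Set (ℝ × ℝ) := {p | 0 ≤ p.1 ∧ 0 ≤ p.2 ∧ p.1 + p.2 ≤ 1}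

def lam : Fin 3 → ℝ × ℝ → ℝ
  | 0 => fun p => 1 - p.1 - p.2
  | 1 => fun p => p.1
  | 2 => fun p => p.2

def phibar (p : ℝ × ℝ) : ℝ := 60 * lam 0 p * lam 1 p * lam 2 p

def phi : Fin 7 → ℝ × ℝ → ℝ
  | 0 => fun p => lam 0 p * (2 * lam 0 p - 1)
  | 1 => fun p => lam 1 p * (2 * lam 1 p - 1)
  | 2 => fun p => lam 2 p * (2 * lam 2 p - 1)
  | 3 => fun p => 4 * lam 0 p * lam 1 p - (1/3) * phibar p
  | 4 => fun p => 4 * lam 1 p * lam 2 p - (1/3) * phibar p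
  | 5 => fun p => 4 * lam 2 p * lam 0 p - (1/3) * phibar p
  | 6 => phibar

def node : Fin 6 → ℝ × ℝ
  | 0 => (0, 0)
  | 1 => (1, 0)
  | 2 => (0, 1)
  | 3 => (1/2, 0)
  | 4 => (1/2, 1/2)
  | 5 => (0, 1/2)

/-- The explicit dual basis function `θ_{σ₄}` associated with the midpoint
`σ₄` of the edge `[σ₁, σ₂]` (barycentric point `(1/2, 1/2, 0)`, i.e. `(1/2, 0)`). -/
def thetaSigma4 (p : ℝ × ℝ) : ℝ :=
  -(65/6) * lam 0 p * (2 * lam 0 p - 1) - (65/6) * lam 1 p * (2 * lam 1 p - 1)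
    - (10/3) * lam 2 p * (2 * lam 2 p - 1) - 490 * lam 0 p * lam 1 p * lam 2 p
    + (215/3) * lam 0 p * lam 1 p + (115/6) * lam 1 p * lam 2 p
    + (115/6) * lam 2 p * lam 0 p



lemma hTmeas : MeasurableSet T := by
  apply MeasurableSet.inter
  · exact measurableSet_le measurable_const measurable_fst
  apply MeasurableSet.inter
  · exact measurableSet_le measurable_const measurable_snd
  · exact measurableSet_le (measurable_fst.add measurable_snd) measurable_const

lemma hTcompact : IsCompact T := by
  have hclosed : IsClosed T := by
    apply IsClosed.inter
    · exact isClosed_le continuous_const continuous_fst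
    apply IsClosed.inter
    · exact isClosed_le continuous_const continuous_snd
    · exact isClosed_le (continuous_fst.add continuous_snd) continuous_const
  have hsub : T ⊆ Set.Icc ((0:ℝ),(0:ℝ)) (1,1) := by
    rintro ⟨x,y⟩ ⟨h1,h2,h3⟩
    simp only [Set.mem_Icc, Prod.mk_le_mk]
    refine ⟨⟨h1,h2⟩, by linarith, by linarith⟩
  exact (isCompact_Icc).of_isClosed_subset hclosed hsub

lemma integrableOn_T (f : ℝ × ℝ → ℝ) (hf : Continuous f) : IntegrableOn f T :=
  hf.continuousOn.integrableOn_compact hTcompact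


lemma setIntegral_T (f : ℝ × ℝ → ℝ) (hf : Continuous f) :
    ∫ p in T, f p = ∫ x in (0:ℝ)..1, ∫ y in (0:ℝ)..(1-x), f (x, y) := by
  have hint : IntegrableOn f T := integrableOn_T f hf
  have hind : Integrable (T.indicator f) (volume : Measure (ℝ × ℝ)) :=
    (integrable_indicator_iff hTmeas).2 hint
  rw [← integral_indicator hTmeas]
  rw [Measure.volume_eq_prod] at hind ⊢
  rw [integral_prod _ hind]
  have hpt : ∀ x : ℝ, (∫ y, T.indicator f (x, y)) =
      (Set.Icc (0:ℝ) 1).indicator (fun x => ∫ y in (0:ℝ)..(1-x), f (x, y)) x := by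
    intro x
    by_cases hx : x ∈ Set.Icc (0:ℝ) 1
    · obtain ⟨hx0, hx1⟩ := hx
      have hslice : (fun y => T.indicator f (x, y)) =
          (Set.Icc (0:ℝ) (1-x)).indicator (fun y => f (x, y)) := by
        funext y
        by_cases hy : y ∈ Set.Icc (0:ℝ) (1-x)
        · obtain ⟨hy0, hy1⟩ := hy
          rw [Set.indicator_of_mem (show (x,y) ∈ T from ⟨hx0, hy0, by linarith⟩) f,
            Set.indicator_of_mem (show y ∈ Set.Icc (0:ℝ) (1-x) from ⟨hy0, hy1⟩) (fun y => f (x, y))]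
        · rw [Set.indicator_of_notMem hy, Set.indicator_of_notMem]
          intro ⟨h1, h2, h3⟩
          exact hy ⟨h2, by linarith⟩
      rw [hslice, integral_indicator measurableSet_Icc,
        Set.indicator_of_mem (show x ∈ Set.Icc (0:ℝ) 1 from ⟨hx0, hx1⟩)
          (fun x => ∫ y in (0:ℝ)..(1-x), f (x, y))]
      rw [integral_Icc_eq_integral_Ioc,
        ← intervalIntegral.integral_of_le (by linarith : (0:ℝ) ≤ 1 - x)]
    · rw [Set.indicator_of_notMem hx]
      have : (fun y => T.indicator f (x, y)) = fun _ => (0:ℝ) := by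
        funext y
        apply Set.indicator_of_notMem
        intro ⟨h1, h2, h3⟩
        simp only [Set.mem_Icc, not_and_or, not_le] at hx
        rcases hx with h | h
        · exact absurd h1 (not_le.2 h)
        · linarith
      rw [this, integral_zero]
  simp only [hpt]
  rw [integral_indicator measurableSet_Icc, integral_Icc_eq_integral_Ioc,
    ← intervalIntegral.integral_of_le (by norm_num : (0:ℝ) ≤ 1)]


lemma Jlem : ∀ (m a : ℕ), ∫ x in (0:ℝ)..1, x ^ a * (1 - x) ^ m =
    (a.factorial * m.factorial : ℝ) / (a + m + 1).factorial := by
  intro m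
  induction m with
  | zero =>
    intro a
    simp only [pow_zero, mul_one, _root_.integral_pow, one_pow, Nat.factorial_zero,
      Nat.cast_one]
    rw [show a + 0 + 1 = a + 1 from rfl, Nat.factorial_succ]
    have h0 : (a:ℝ) + 1 ≠ 0 := by positivity
    have hf : ((a.factorial : ℝ)) ≠ 0 := by positivity
    push_cast
    rw [zero_pow (by omega)]
    field_simp
    norm_num
  | succ m ih =>
    intro a
    have hu : ∀ x ∈ Set.uIcc (0:ℝ) 1, HasDerivAt (fun x : ℝ => (1-x)^(m+1))
        (-((m+1:ℝ)*(1-x)^m)) x := by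
      intro x _
      have h1 : HasDerivAt (fun x : ℝ => 1 - x) (-1) x := (hasDerivAt_id x).const_sub 1
      have h2 := h1.pow (m+1)
      refine h2.congr_deriv ?_
      rw [Nat.add_sub_cancel]
      push_cast
      ring
    have hv : ∀ x ∈ Set.uIcc (0:ℝ) 1, HasDerivAt (fun x : ℝ => x^(a+1)/((a:ℝ)+1))
        (x^a) x := by
      intro x _
      have ha : ((a:ℝ)+1) ≠ 0 := by positivity
      have h2 := (hasDerivAt_pow (a+1) x).div_const ((a:ℝ)+1)
      refine h2.congr_deriv ?_
      rw [Nat.add_sub_cancel]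
      push_cast
      field_simp
    have key := intervalIntegral.integral_mul_deriv_eq_deriv_mul hu hv
      (by apply Continuous.intervalIntegrable; fun_prop)
      (by apply Continuous.intervalIntegrable; fun_prop)
    have hl : ∫ x in (0:ℝ)..1, x ^ a * (1-x)^(m+1)
        = ∫ x in (0:ℝ)..1, (1-x)^(m+1) * x ^ a := by
      simp only [mul_comm]
    rw [hl, key]
    have hrw : ∫ x in (0:ℝ)..1, -((m+1:ℝ)*(1-x)^m) * (x^(a+1)/((a:ℝ)+1))
        = (-((m+1:ℝ)/((a:ℝ)+1))) * ∫ x in (0:ℝ)..1, x^(a+1) * (1-x)^m := by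
      rw [← intervalIntegral.integral_const_mul]
      congr 1; funext x; ring
    rw [hrw, ih (a+1)]
    rw [show a + 1 + m + 1 = a + m + 2 from by omega,
      show a + (m+1) + 1 = a + m + 2 from by omega]
    have h1 : ((a:ℝ)+1) ≠ 0 := by positivity
    have h2 : ((a+m+2).factorial : ℝ) ≠ 0 := by positivity
    rw [Nat.factorial_succ a, Nat.factorial_succ m]
    push_cast
    rw [sub_self, zero_pow (by omega), zero_pow (by omega)]
    field_simp
    ring

lemma Imono (a b : ℕ) : ∫ p in T, p.1 ^ a * p.2 ^ b =
    (a.factorial * b.factorial : ℝ) / (a + b + 2).factorial := by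
  rw [setIntegral_T _ (by fun_prop)]
  have inner : ∀ x : ℝ, (∫ y in (0:ℝ)..(1-x), x ^ a * y ^ b)
      = (x ^ a * (1-x)^(b+1)) / ((b:ℝ)+1) := by
    intro x
    rw [intervalIntegral.integral_const_mul, _root_.integral_pow]
    rw [zero_pow (by omega)]
    ring
  simp only [inner]
  rw [intervalIntegral.integral_div, Jlem (b+1) a]
  rw [show a + (b+1) + 1 = a + b + 2 from by omega]
  have h1 : ((b:ℝ)+1) ≠ 0 := by positivity
  have h2 : ((a+b+2).factorial : ℝ) ≠ 0 := by positivity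
  rw [Nat.factorial_succ b]
  push_cast
  field_simp

lemma combo {n : ℕ} (e : Fin n → ℝ × ℕ × ℕ) :
    ∫ p in T, (∑ i : Fin n, (e i).1 * (p.1 ^ (e i).2.1 * p.2 ^ (e i).2.2)) =
    ∑ i : Fin n, (e i).1 * (((e i).2.1.factorial * (e i).2.2.factorial : ℝ) /
      ((e i).2.1 + (e i).2.2 + 2).factorial) := by
  rw [MeasureTheory.integral_finset_sum _ (fun i _ => (integrableOn_T _ (by fun_prop)))]
  refine Finset.sum_congr rfl fun i _ => ?_
  rw [MeasureTheory.integral_const_mul, Imono]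

lemma cont_phibar : Continuous phibar := by
  unfold phibar
  simp only [lam]
  fun_prop

lemma cont_phi (j : Fin 7) : Continuous (phi j) := by
  fin_cases j <;> simp only [phi] <;>
    first
      | exact cont_phibar
      | (simp only [phibar, lam]; fun_prop)

lemma cont_theta : Continuous thetaSigma4 := by
  unfold thetaSigma4
  simp only [lam]
  fun_prop

def E0 : Fin 19 → ℝ × ℕ × ℕ := ![(((-65 : ℝ)/6), 0, 0), (((175 : ℝ)/2), 0, 1), (((-1405 : ℝ)/6), 0, 2), (((505 : ℝ)/2), 0, 3), ((-95 : ℝ), 0, 4), (((295 : ℝ)/2), 1, 0), (((-3475 : ℝ)/3), 1, 1), (((5795 : ℝ)/2), 1, 2), ((-2870 : ℝ), 1, 3), ((980 : ℝ), 1, 4), (((-1445 : ℝ)/3), 2, 0), ((3220 : ℝ), 2, 1), ((-5685 : ℝ), 2, 2), ((2940 : ℝ), 2, 3), ((575 : ℝ), 3, 0), ((-3140 : ℝ), 3, 1), ((2940 : ℝ), 3, 2), ((-230 : ℝ), 4, 0), ((980 : ℝ), 4, 1)]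

lemma key0 : ∫ p in T, thetaSigma4 p * phi 0 p = 0 := by
  have h : (fun p : ℝ × ℝ => thetaSigma4 p * phi 0 p) =
      fun p => ∑ i : Fin 19, (E0 i).1 * (p.1 ^ (E0 i).2.1 * p.2 ^ (E0 i).2.2) := by
    funext p
    simp only [E0, thetaSigma4, phi, lam, phibar, Fin.sum_univ_succ, Fin.sum_univ_zero,
      Matrix.cons_val_zero, Matrix.cons_val_one, Matrix.head_cons, Matrix.cons_val_succ]
    ring
  rw [h, combo]
  simp only [E0, Fin.sum_univ_succ, Fin.sum_univ_zero,
    Matrix.cons_val_zero, Matrix.cons_val_one, Matrix.head_cons, Matrix.cons_val_succ]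
  norm_num [Nat.factorial]

def E1 : Fin 11 → ℝ × ℕ × ℕ := ![(((65 : ℝ)/6), 1, 0), ((-55 : ℝ), 1, 1), (((95 : ℝ)/2), 1, 2), (((-410 : ℝ)/3), 2, 0), ((715 : ℝ), 2, 1), ((-585 : ℝ), 2, 2), ((345 : ℝ), 3, 0), ((-1700 : ℝ), 3, 1), ((980 : ℝ), 3, 2), ((-230 : ℝ), 4, 0), ((980 : ℝ), 4, 1)]

lemma key1 : ∫ p in T, thetaSigma4 p * phi 1 p = 0 := by
  have h : (fun p : ℝ × ℝ => thetaSigma4 p * phi 1 p) =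
      fun p => ∑ i : Fin 11, (E1 i).1 * (p.1 ^ (E1 i).2.1 * p.2 ^ (E1 i).2.2) := by
    funext p
    simp only [E1, thetaSigma4, phi, lam, phibar, Fin.sum_univ_succ, Fin.sum_univ_zero,
      Matrix.cons_val_zero, Matrix.cons_val_one, Matrix.head_cons, Matrix.cons_val_succ]
    ring
  rw [h, combo]
  simp only [E1, Fin.sum_univ_succ, Fin.sum_univ_zero,
    Matrix.cons_val_zero, Matrix.cons_val_one, Matrix.head_cons, Matrix.cons_val_succ]
  norm_num [Nat.factorial]

def E2 : Fin 11 → ℝ × ℕ × ℕ := ![(((65 : ℝ)/6), 0, 1), (((-230 : ℝ)/3), 0, 2), (((315 : ℝ)/2), 0, 3), ((-95 : ℝ), 0, 4), ((-115 : ℝ), 1, 1), ((835 : ℝ), 1, 2), ((-1700 : ℝ), 1, 3), ((980 : ℝ), 1, 4), ((115 : ℝ), 2, 1), ((-720 : ℝ), 2, 2), ((980 : ℝ), 2, 3)]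

lemma key2 : ∫ p in T, thetaSigma4 p * phi 2 p = 0 := by
  have h : (fun p : ℝ × ℝ => thetaSigma4 p * phi 2 p) =
      fun p => ∑ i : Fin 11, (E2 i).1 * (p.1 ^ (E2 i).2.1 * p.2 ^ (E2 i).2.2) := by
    funext p
    simp only [E2, thetaSigma4, phi, lam, phibar, Fin.sum_univ_succ, Fin.sum_univ_zero,
      Matrix.cons_val_zero, Matrix.cons_val_one, Matrix.head_cons, Matrix.cons_val_succ]
    ring
  rw [h, combo]
  simp only [E2, Fin.sum_univ_succ, Fin.sum_univ_zero,
    Matrix.cons_val_zero, Matrix.cons_val_one, Matrix.head_cons, Matrix.cons_val_succ]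
  norm_num [Nat.factorial]

def E3 : Fin 17 → ℝ × ℕ × ℕ := ![(((-130 : ℝ)/3), 1, 0), ((480 : ℝ), 1, 1), (((-5180 : ℝ)/3), 1, 2), ((2240 : ℝ), 1, 3), ((-950 : ℝ), 1, 4), (((1510 : ℝ)/3), 2, 0), (((-16850 : ℝ)/3), 2, 1), ((20070 : ℝ), 2, 2), ((-24810 : ℝ), 2, 3), ((9800 : ℝ), 2, 4), ((-920 : ℝ), 3, 0), ((9440 : ℝ), 3, 1), ((-28120 : ℝ), 3, 2), ((19600 : ℝ), 3, 3), ((460 : ℝ), 4, 0), ((-4260 : ℝ), 4, 1), ((9800 : ℝ), 4, 2)]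

lemma key3 : ∫ p in T, thetaSigma4 p * phi 3 p = (1/2 : ℝ) := by
  have h : (fun p : ℝ × ℝ => thetaSigma4 p * phi 3 p) =
      fun p => ∑ i : Fin 17, (E3 i).1 * (p.1 ^ (E3 i).2.1 * p.2 ^ (E3 i).2.2) := by
    funext p
    simp only [E3, thetaSigma4, phi, lam, phibar, Fin.sum_univ_succ, Fin.sum_univ_zero,
      Matrix.cons_val_zero, Matrix.cons_val_one, Matrix.head_cons, Matrix.cons_val_succ]
    ring
  rw [h, combo]
  simp only [E3, Fin.sum_univ_succ, Fin.sum_univ_zero,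
    Matrix.cons_val_zero, Matrix.cons_val_one, Matrix.head_cons, Matrix.cons_val_succ]
  norm_num [Nat.factorial]

def E4 : Fin 13 → ℝ × ℕ × ℕ := ![(((520 : ℝ)/3), 1, 1), (((-3290 : ℝ)/3), 1, 2), ((1860 : ℝ), 1, 3), ((-950 : ℝ), 1, 4), (((-6170 : ℝ)/3), 2, 1), ((13080 : ℝ), 2, 2), ((-20890 : ℝ), 2, 3), ((9800 : ℝ), 2, 4), ((4140 : ℝ), 3, 1), ((-22240 : ℝ), 3, 2), ((19600 : ℝ), 3, 3), ((-2300 : ℝ), 4, 1), ((9800 : ℝ), 4, 2)]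

lemma key4 : ∫ p in T, thetaSigma4 p * phi 4 p = 0 := by
  have h : (fun p : ℝ × ℝ => thetaSigma4 p * phi 4 p) =
      fun p => ∑ i : Fin 13, (E4 i).1 * (p.1 ^ (E4 i).2.1 * p.2 ^ (E4 i).2.2) := by
    funext p
    simp only [E4, thetaSigma4, phi, lam, phibar, Fin.sum_univ_succ, Fin.sum_univ_zero,
      Matrix.cons_val_zero, Matrix.cons_val_one, Matrix.head_cons, Matrix.cons_val_succ]
    ring
  rw [h, combo]
  simp only [E4, Fin.sum_univ_succ, Fin.sum_univ_zero,
    Matrix.cons_val_zero, Matrix.cons_val_one, Matrix.head_cons, Matrix.cons_val_succ]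
  norm_num [Nat.factorial]

def E5 : Fin 17 → ℝ × ℕ × ℕ := ![(((-130 : ℝ)/3), 0, 1), (((790 : ℝ)/3), 0, 2), ((-410 : ℝ), 0, 3), ((190 : ℝ), 0, 4), ((720 : ℝ), 1, 1), (((-13250 : ℝ)/3), 1, 2), ((6620 : ℝ), 1, 3), ((-2910 : ℝ), 1, 4), (((-10310 : ℝ)/3), 2, 1), ((20340 : ℝ), 2, 2), ((-26770 : ℝ), 2, 3), ((9800 : ℝ), 2, 4), ((5060 : ℝ), 3, 1), ((-26160 : ℝ), 3, 2), ((19600 : ℝ), 3, 3), ((-2300 : ℝ), 4, 1), ((9800 : ℝ), 4, 2)]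

lemma key5 : ∫ p in T, thetaSigma4 p * phi 5 p = 0 := by
  have h : (fun p : ℝ × ℝ => thetaSigma4 p * phi 5 p) =
      fun p => ∑ i : Fin 17, (E5 i).1 * (p.1 ^ (E5 i).2.1 * p.2 ^ (E5 i).2.2) := by
    funext p
    simp only [E5, thetaSigma4, phi, lam, phibar, Fin.sum_univ_succ, Fin.sum_univ_zero,
      Matrix.cons_val_zero, Matrix.cons_val_one, Matrix.head_cons, Matrix.cons_val_succ]
    ring
  rw [h, combo]
  simp only [E5, Fin.sum_univ_succ, Fin.sum_univ_zero,
    Matrix.cons_val_zero, Matrix.cons_val_one, Matrix.head_cons, Matrix.cons_val_succ]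
  norm_num [Nat.factorial]

def E6 : Fin 13 → ℝ × ℕ × ℕ := ![((-650 : ℝ), 1, 1), ((3950 : ℝ), 1, 2), ((-6150 : ℝ), 1, 3), ((2850 : ℝ), 1, 4), ((7550 : ℝ), 2, 1), ((-46500 : ℝ), 2, 2), ((68550 : ℝ), 2, 3), ((-29400 : ℝ), 2, 4), ((-13800 : ℝ), 3, 1), ((72600 : ℝ), 3, 2), ((-58800 : ℝ), 3, 3), ((6900 : ℝ), 4, 1), ((-29400 : ℝ), 4, 2)]

lemma key6 : ∫ p in T, thetaSigma4 p * phi 6 p = 0 := by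
  have h : (fun p : ℝ × ℝ => thetaSigma4 p * phi 6 p) =
      fun p => ∑ i : Fin 13, (E6 i).1 * (p.1 ^ (E6 i).2.1 * p.2 ^ (E6 i).2.2) := by
    funext p
    simp only [E6, thetaSigma4, phi, lam, phibar, Fin.sum_univ_succ, Fin.sum_univ_zero,
      Matrix.cons_val_zero, Matrix.cons_val_one, Matrix.head_cons, Matrix.cons_val_succ]
    ring
  rw [h, combo]
  simp only [E6, Fin.sum_univ_succ, Fin.sum_univ_zero,
    Matrix.cons_val_zero, Matrix.cons_val_one, Matrix.head_cons, Matrix.cons_val_succ]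
  norm_num [Nat.factorial]


/-- Riesz property of `θ_{σ₄}`: for every `u_h ∈ V_k(T)`,
`(1/|T|) ∫_T θ_{σ₄} u_h = u_h(σ₄)`. -/
theorem riesz_midpoint (c : Fin 7 → ℝ)
    (uh : ℝ × ℝ → ℝ) (huh : uh = fun p => ∑ j : Fin 7, c j * phi j p) :
    (1 / ((1 : ℝ) / 2)) * ∫ p in T, thetaSigma4 p * uh p = uh (1/2, 0) := by
  subst huh
  have hexp : ∀ p : ℝ × ℝ, thetaSigma4 p * ∑ j : Fin 7, c j * phi j p
      = ∑ j : Fin 7, c j * (thetaSigma4 p * phi j p) := by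
    intro p
    rw [Finset.mul_sum]
    exact Finset.sum_congr rfl fun j _ => by ring
  simp only [hexp]
  rw [MeasureTheory.integral_finset_sum _
    (fun j _ => (integrableOn_T _ (by exact (continuous_const.mul
      (cont_theta.mul (cont_phi j)))) : Integrable _ _))]
  simp only [MeasureTheory.integral_const_mul]
  rw [Fin.sum_univ_seven, Fin.sum_univ_seven]
  rw [key0, key1, key2, key3, key4, key5, key6]
  simp only [phi, phibar, lam]
  norm_num
  ring
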